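/- Suppose G is a connected graph with spanning tree T admitting an acyclic charging scheme of value v. Then for any ε > 0 and any nonnegative edge weights on G, the greedy spanner algorithm (forcing the edges of T) outputs a (1+ε)-spanner G' containing T with w(G') ≤ (1 + v/ε)·w(T). -/

import Mathlib

open scoped Classical
noncomputable section

/-- Weighted length of a walk: sum of edge weights with multiplicity. -/
def wlen {V : Type*} (w : Sym2 V → ℝ) {G : SimpleGraph V} {u v : V}
    (p : G.Walk u v) : ℝ :=
  (p.edges.map w).sum

/-- Weighted shortest-path distance: infimum of weighted lengths of walks. -/
def wdist {V : Type*} (G : SimpleGraph V) (w : Sym2 V → ℝ) (u v : V) : ℝ :=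
  sInf {x : ℝ | ∃ p : G.Walk u v, wlen w p = x}

/-- Total weight of a graph: sum of weights over its edge set. -/
def totalWeight {V : Type*} (G : SimpleGraph V) (w : Sym2 V → ℝ) : ℝ :=
  ∑ᶠ e ∈ G.edgeSet, w e

/-- `T` is a spanning tree of `G`. -/
def IsSpanningTree {V : Type*} (G T : SimpleGraph V) : Prop :=
  T ≤ G ∧ T.IsTree

/-- A detour in `G`: an edge `{u,v}` together with a path `P` from `v` to `u`
such that `e + P` is a simple cycle. -/
structure Detour {V : Type*} (G : SimpleGraph V) where
  u : V
  v : V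
  adj : G.Adj u v
  path : G.Walk v u
  cyc : (SimpleGraph.Walk.cons adj path).IsCycle

/-- The edge of a detour. -/
def Detour.edge {V : Type*} {G : SimpleGraph V} (d : Detour G) : Sym2 V :=
  s(d.u, d.v)

/-- Total charge going out of edge `e`. -/
def chargeOut {V : Type*} {G : SimpleGraph V} (x : Detour G → ℝ) (e : Sym2 V) : ℝ :=
  ∑ᶠ d ∈ {d : Detour G | d.edge = e}, x d

/-- Total charge coming into edge `e` (as part of detour paths). -/
def chargeIn {V : Type*} {G : SimpleGraph V} (x : Detour G → ℝ) (e : Sym2 V) : ℝ :=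
  ∑ᶠ d ∈ {d : Detour G | e ∈ d.path.edges}, x d

/-- A charging scheme from `G` to `T` of value `v`. -/
def IsChargingScheme {V : Type*} (G T : SimpleGraph V) (v : ℝ)
    (x : Detour G → ℝ) : Prop :=
  (∀ d, 0 ≤ x d) ∧
  (x.support.Finite) ∧
  (∀ e ∈ G.edgeSet, e ∉ T.edgeSet → 1 ≤ chargeOut x e) ∧
  (∀ e ∈ G.edgeSet, e ∉ T.edgeSet → chargeIn x e - chargeOut x e ≤ 0) ∧
  (∀ e ∈ T.edgeSet, chargeIn x e - chargeOut x e ≤ v)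

/-- An acyclic charging scheme: additionally only non-tree edges charge, and
there is an edge ordering in which charging edges precede charged edges. -/
def IsAcyclicScheme {V : Type*} (G T : SimpleGraph V) (v : ℝ)
    (x : Detour G → ℝ) : Prop :=
  IsChargingScheme G T v x ∧
  (∀ d : Detour G, x d ≠ 0 → d.edge ∉ T.edgeSet) ∧
  (∃ ord : Sym2 V → ℕ, ∀ d : Detour G, x d ≠ 0 →
    ∀ e ∈ d.path.edges, ord d.edge < ord e)
/-- One step of the greedy spanner algorithm: add the edge `{p.1, p.2}` iff
`(1+ε)·w(e)` is strictly less than the current distance between its endpoints. -/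
def greedyStep {V : Type*} (ε : ℝ) (w : Sym2 V → ℝ)
    (G' : SimpleGraph V) (p : V × V) : SimpleGraph V :=
  if (1 + ε) * w s(p.1, p.2) < wdist G' w p.1 p.2 then
    G' ⊔ SimpleGraph.fromEdgeSet {s(p.1, p.2)}
  else G'

/-- The greedy spanner algorithm: start from `T` and process the listed edges in
order, adding each edge iff it is not yet `(1+ε)`-approximated. -/
def greedy {V : Type*} (ε : ℝ) (w : Sym2 V → ℝ)
    (T : SimpleGraph V) (l : List (V × V)) : SimpleGraph V :=
  l.foldl (greedyStep ε w) T

/-- `l` lists exactly the edges of `G` not in `T` (each once, in some orientation),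
in non-decreasing order of weight. -/
def IsGreedyInput {V : Type*} (G T : SimpleGraph V) (w : Sym2 V → ℝ)
    (l : List (V × V)) : Prop :=
  (l.map fun p => w s(p.1, p.2)).Pairwise (· ≤ ·) ∧
  (l.map fun p => s(p.1, p.2)).Nodup ∧
  (∀ p ∈ l, G.Adj p.1 p.2 ∧ ¬ T.Adj p.1 p.2) ∧
  (∀ u v : V, G.Adj u v → ¬ T.Adj u v → s(u, v) ∈ l.map fun p => s(p.1, p.2))

section Aux
variable {V : Type*} {G H : SimpleGraph V} {w : Sym2 V → ℝ}

lemma sublist_sum_le {l₁ l₂ : List ℝ} (h : l₁.Sublist l₂) (hn : ∀ a ∈ l₂, 0 ≤ a) :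
    l₁.sum ≤ l₂.sum := by
  induction h with
  | slnil => simp
  | cons a h ih =>
      simp only [List.sum_cons]
      have := ih (fun b hb => hn b (List.mem_cons_of_mem _ hb))
      have ha := hn a (List.mem_cons_self)
      linarith
  | cons_cons a h ih =>
      simp only [List.sum_cons]
      have := ih (fun b hb => hn b (List.mem_cons_of_mem _ hb))
      linarith

lemma subperm_sum_le {l₁ l₂ : List ℝ} (h : l₁.Subperm l₂) (hn : ∀ a ∈ l₂, 0 ≤ a) :
    l₁.sum ≤ l₂.sum := by
  obtain ⟨l', hperm, hsub⟩ := h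
  calc l₁.sum = l'.sum := hperm.sum_eq.symm
    _ ≤ l₂.sum := sublist_sum_le hsub hn

lemma wlen_nonneg (hw : ∀ e, 0 ≤ w e) {u v : V} (p : G.Walk u v) : 0 ≤ wlen w p := by
  apply List.sum_nonneg
  intro a ha
  obtain ⟨e, _, rfl⟩ := List.mem_map.mp ha
  exact hw e

lemma wlen_cons {u v z : V} (h : G.Adj u v) (p : G.Walk v z) :
    wlen w (SimpleGraph.Walk.cons h p) = w s(u, v) + wlen w p := by
  simp [wlen]

lemma wlen_append {u v z : V} (p : G.Walk u v) (q : G.Walk v z) :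
    wlen w (p.append q) = wlen w p + wlen w q := by
  simp [wlen, SimpleGraph.Walk.edges_append]

lemma wlen_reverse {u v : V} (p : G.Walk u v) : wlen w p.reverse = wlen w p := by
  simp [wlen, SimpleGraph.Walk.edges_reverse, List.map_reverse, List.sum_reverse]

lemma wlen_nil {u : V} : wlen w (SimpleGraph.Walk.nil (u := u) (G := G)) = 0 := by
  simp [wlen]

lemma wlen_transfer {u v : V} (p : G.Walk u v) (h : ∀ e ∈ p.edges, e ∈ H.edgeSet) :
    wlen w (p.transfer H h) = wlen w p := by
  simp [wlen, SimpleGraph.Walk.edges_transfer]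

lemma wlen_mapLe (hle : G ≤ H) {u v : V} (p : G.Walk u v) :
    wlen w (p.mapLe hle) = wlen w p := by
  simp only [wlen, SimpleGraph.Walk.mapLe, SimpleGraph.Walk.edges_map]
  rw [List.map_map]
  congr 1
  apply List.map_congr_left
  intro e he
  induction e using Sym2.ind with
  | _ a b => rfl

lemma wdist_nonneg (hw : ∀ e, 0 ≤ w e) (u v : V) : 0 ≤ wdist G w u v := by
  apply Real.sInf_nonneg
  rintro r ⟨p, rfl⟩
  exact wlen_nonneg hw p

lemma wdist_bddBelow (hw : ∀ e, 0 ≤ w e) (u v : V) :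
    BddBelow {x : ℝ | ∃ p : G.Walk u v, wlen w p = x} := by
  exact ⟨0, by rintro r ⟨p, rfl⟩; exact wlen_nonneg hw p⟩

lemma wdist_le_wlen (hw : ∀ e, 0 ≤ w e) {u v : V} (p : G.Walk u v) :
    wdist G w u v ≤ wlen w p :=
  csInf_le (wdist_bddBelow hw u v) ⟨p, rfl⟩

lemma wdist_comm (hw : ∀ e, 0 ≤ w e) (u v : V) : wdist G w u v = wdist G w v u := by
  have key : ∀ (a b : V), wdist G w a b ≤ wdist G w b a := by
    intro a b
    by_cases hne : Nonempty (G.Walk b a)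
    · apply le_csInf
      · obtain ⟨p⟩ := hne; exact ⟨wlen w p, p, rfl⟩
      · rintro r ⟨p, rfl⟩
        calc wdist G w a b ≤ wlen w p.reverse := wdist_le_wlen hw _
          _ = wlen w p := wlen_reverse p
    · have h2 : {x : ℝ | ∃ p : G.Walk b a, wlen w p = x} = ∅ := by
        ext r; simp only [Set.mem_setOf_eq, Set.mem_empty_iff_false, iff_false]
        rintro ⟨p, -⟩; exact hne ⟨p⟩
      have h1 : {x : ℝ | ∃ p : G.Walk a b, wlen w p = x} = ∅ := by
        ext r; simp only [Set.mem_setOf_eq, Set.mem_empty_iff_false, iff_false]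
        rintro ⟨p, -⟩; exact hne ⟨p.reverse⟩
      rw [wdist, wdist, h1, h2]
  exact le_antisymm (key u v) (key v u)

lemma wdist_anti (hw : ∀ e, 0 ≤ w e) (hging : G ≤ H) (u v : V) (hne : Nonempty (G.Walk u v)) :
    wdist H w u v ≤ wdist G w u v := by
  apply le_csInf
  · obtain ⟨p⟩ := hne; exact ⟨wlen w p, p, rfl⟩
  · rintro r ⟨p, rfl⟩
    calc wdist H w u v ≤ wlen w (p.mapLe hging) := wdist_le_wlen hw _
      _ = wlen w p := wlen_mapLe hging p

lemma exists_walk_wlen_lt (hw : ∀ e, 0 ≤ w e) {u v : V} (hne : Nonempty (G.Walk u v))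
    {δ : ℝ} (hδ : 0 < δ) : ∃ p : G.Walk u v, wlen w p < wdist G w u v + δ := by
  have hne' : {x : ℝ | ∃ p : G.Walk u v, wlen w p = x}.Nonempty := by
    obtain ⟨p⟩ := hne; exact ⟨wlen w p, p, rfl⟩
  obtain ⟨r, ⟨p, rfl⟩, hr⟩ := Real.lt_sInf_add_pos hne' hδ
  exact ⟨p, hr⟩

end Aux

section GreedyLemmas
variable {V : Type*} {G T : SimpleGraph V} {w : Sym2 V → ℝ} {ε : ℝ}

lemma le_greedyStep (G' : SimpleGraph V) (p : V × V) : G' ≤ greedyStep ε w G' p := by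
  unfold greedyStep
  split
  · exact le_sup_left
  · exact le_rfl

lemma le_greedy (A : SimpleGraph V) (l : List (V × V)) : A ≤ greedy ε w A l := by
  induction l generalizing A with
  | nil => exact le_rfl
  | cons p l ih => exact le_trans (le_greedyStep A p) (ih _)

lemma greedy_mono_take (A : SimpleGraph V) (l : List (V × V)) (i : ℕ) :
    greedy ε w A (l.take i) ≤ greedy ε w A l := by
  conv_rhs => rw [← List.take_append_drop i l, greedy, List.foldl_append]
  exact le_greedy _ _

lemma greedy_le (hTG : T ≤ G) (l : List (V × V)) (hl : ∀ p ∈ l, G.Adj p.1 p.2) :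
    greedy ε w T l ≤ G := by
  induction l generalizing T with
  | nil => exact hTG
  | cons p l ih =>
      refine ih ?_ (fun q hq => hl q (List.mem_cons_of_mem _ hq))
      unfold greedyStep
      split
      · refine sup_le hTG ?_
        intro a b hab
        simp only [SimpleGraph.fromEdgeSet_adj, Set.mem_singleton_iff] at hab
        obtain ⟨hab, hne⟩ := hab
        have := hl p (List.mem_cons_self)
        rcases Sym2.eq_iff.mp hab with ⟨rfl, rfl⟩ | ⟨rfl, rfl⟩
        · exact this
        · exact this.symm
      · exact hTG

/-- Characterization of the edges of the greedy graph. -/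
lemma greedy_edge_mem (l : List (V × V)) (e : Sym2 V)
    (he : e ∈ (greedy ε w T l).edgeSet) :
    e ∈ T.edgeSet ∨ ∃ i : Fin l.length, s((l.get i).1, (l.get i).2) = e ∧
      (1 + ε) * w e < wdist (greedy ε w T (l.take i)) w (l.get i).1 (l.get i).2 := by
  induction l generalizing T with
  | nil => exact Or.inl he
  | cons p l ih =>
      rcases ih (T := greedyStep ε w T p) he with h | ⟨i, hi, hcond⟩
      · unfold greedyStep at h
        split_ifs at h with hc
        · rw [SimpleGraph.edgeSet_sup] at h
          rcases h with h | h
          · exact Or.inl h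
          · simp only [SimpleGraph.edgeSet_fromEdgeSet, Set.mem_diff,
              Set.mem_singleton_iff] at h
            refine Or.inr ⟨⟨0, Nat.succ_pos _⟩, ?_, ?_⟩
            · simpa using h.1.symm
            · rw [← h.1] at hc
              simpa [greedy] using hc
        · exact Or.inl h
      · refine Or.inr ⟨i.succ, ?_, ?_⟩
        · simpa using hi
        · have : (p :: l).take (i.succ : ℕ) = p :: l.take i := rfl
          rw [this]
          simpa [greedy] using hcond

lemma greedy_accept_mem (l : List (V × V)) (i : Fin l.length)
    (hc : (1 + ε) * w s((l.get i).1, (l.get i).2) <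
      wdist (greedy ε w T (l.take i)) w (l.get i).1 (l.get i).2)
    (hne : (l.get i).1 ≠ (l.get i).2) {j : ℕ} (hij : (i : ℕ) < j) :
    s((l.get i).1, (l.get i).2) ∈ (greedy ε w T (l.take j)).edgeSet := by
  have h2 : greedy ε w T (l.take ((i : ℕ) + 1)) =
      greedyStep ε w (greedy ε w T (l.take i)) (l.get i) := by
    rw [← List.take_concat_get i.isLt, List.concat_eq_append, greedy,
      List.foldl_append]
    rfl
  have hmem : s((l.get i).1, (l.get i).2) ∈
      (greedy ε w T (l.take ((i : ℕ) + 1))).edgeSet := by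
    rw [h2]
    unfold greedyStep
    rw [if_pos hc, SimpleGraph.edgeSet_sup]
    right
    simp only [SimpleGraph.edgeSet_fromEdgeSet, Set.mem_diff, Set.mem_singleton_iff,
      Sym2.mk_isDiag_iff]
    exact ⟨by trivial, hne⟩
  have htk : l.take ((i : ℕ) + 1) = (l.take j).take ((i : ℕ) + 1) := by
    rw [List.take_take, min_eq_left (by omega)]
  rw [htk] at hmem
  exact (greedy_mono_take T (l.take j) ((i : ℕ) + 1)) hmem

end GreedyLemmas

section WalkLemmas
variable {V : Type*} {G H Γ Δ : SimpleGraph V} {w : Sym2 V → ℝ}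

lemma walk_split {a b : V} (Q : Γ.Walk a b) (f : Sym2 V) (hf : f ∈ Q.edges) :
    ∃ (x y : V) (A : Γ.Walk a x) (B : Γ.Walk y b) (_ : Γ.Adj x y),
      s(x, y) = f ∧ Q.edges = A.edges ++ s(x, y) :: B.edges := by
  induction Q with
  | nil => simp at hf
  | @cons a c b h q ih =>
      rw [SimpleGraph.Walk.edges_cons] at hf
      by_cases hfe : f = s(a, c)
      · exact ⟨a, c, SimpleGraph.Walk.nil, q, h, hfe.symm, by
          simp [SimpleGraph.Walk.edges_cons, hfe]⟩
      · have hf' : f ∈ q.edges := by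
          rcases List.mem_cons.mp hf with h1 | h1
          · exact absurd h1 hfe
          · exact h1
        obtain ⟨x, y, A, B, hadj, hxy, hedges⟩ := ih hf'
        exact ⟨x, y, SimpleGraph.Walk.cons h A, B, hadj, hxy, by
          simp [SimpleGraph.Walk.edges_cons, hedges]⟩

lemma concat_exists (Pred : Sym2 V → Prop) {a b : V} (p : Γ.Walk a b)
    (h : ∀ x y : V, s(x, y) ∈ p.edges →
      ∃ W : Δ.Walk x y, ∀ g ∈ W.edges, Pred g) :
    ∃ W : Δ.Walk a b, ∀ g ∈ W.edges, Pred g := by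
  induction p with
  | nil => exact ⟨SimpleGraph.Walk.nil, by simp⟩
  | @cons a c b hadj q ih =>
      obtain ⟨W1, hW1⟩ := h a c (by simp)
      obtain ⟨W2, hW2⟩ := ih (fun x y hxy => h x y (by simp [hxy]))
      refine ⟨W1.append W2, ?_⟩
      intro g hg
      rw [SimpleGraph.Walk.edges_append, List.mem_append] at hg
      rcases hg with hg | hg
      · exact hW1 g hg
      · exact hW2 g hg

lemma shadow (Pred : Sym2 V → Prop) (bound : Sym2 V → ℝ) {a b : V} (p : Γ.Walk a b)
    (h : ∀ x y : V, s(x, y) ∈ p.edges → ∀ δ : ℝ, 0 < δ →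
      ∃ W : Δ.Walk x y, wlen w W ≤ bound s(x, y) + δ ∧ ∀ g ∈ W.edges, Pred g) :
    ∀ δ : ℝ, 0 < δ → ∃ W : Δ.Walk a b,
      wlen w W ≤ (p.edges.map bound).sum + δ ∧ ∀ g ∈ W.edges, Pred g := by
  induction p with
  | nil =>
      intro δ hδ
      exact ⟨SimpleGraph.Walk.nil, by simp [wlen]; linarith, by simp⟩
  | @cons a c b hadj q ih =>
      intro δ hδ
      obtain ⟨W1, hW1, hP1⟩ := h a c (by simp) (δ / 2) (by linarith)
      obtain ⟨W2, hW2, hP2⟩ := ih (fun x y hxy δ' hδ' => h x y (by simp [hxy]) δ' hδ')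
        (δ / 2) (by linarith)
      refine ⟨W1.append W2, ?_, ?_⟩
      · rw [wlen_append]
        simp only [SimpleGraph.Walk.edges_cons, List.map_cons, List.sum_cons]
        linarith
      · intro g hg
        rw [SimpleGraph.Walk.edges_append, List.mem_append] at hg
        rcases hg with hg | hg
        · exact hP1 g hg
        · exact hP2 g hg

end WalkLemmas


section GreedyFacts
variable {V : Type*} {G T : SimpleGraph V} {w : Sym2 V → ℝ} {ε : ℝ}

lemma sorted_weight {l : List (V × V)}
    (hs : (l.map fun p => w s(p.1, p.2)).Pairwise (· ≤ ·))
    {i j : Fin l.length} (hij : (i : ℕ) ≤ (j : ℕ)) :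
    w s((l.get i).1, (l.get i).2) ≤ w s((l.get j).1, (l.get j).2) := by
  rcases eq_or_lt_of_le hij with h | h
  · have : i = j := Fin.ext h
    subst this; exact le_rfl
  · have hi : (i : ℕ) < (l.map fun p => w s(p.1, p.2)).length := by simpa using i.isLt
    have hj : (j : ℕ) < (l.map fun p => w s(p.1, p.2)).length := by simpa using j.isLt
    have := hs.rel_get_of_lt (a := ⟨(i : ℕ), hi⟩) (b := ⟨(j : ℕ), hj⟩)
      (Fin.mk_lt_mk.mpr h)
    simpa using this

lemma greedy_factB (hε : 0 < ε) (hw : ∀ e, 0 ≤ w e) (l : List (V × V))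
    (hl : IsGreedyInput G T w l) (hTc : T.Connected) :
    ∀ a b : V, G.Adj a b → ∀ δ : ℝ, 0 < δ →
      ∃ W : (greedy ε w T l).Walk a b, wlen w W ≤ (1 + ε) * w s(a, b) + δ := by
  intro a b hab δ hδ
  have hwab := hw s(a, b)
  have hεw : 0 ≤ ε * w s(a, b) := mul_nonneg hε.le hwab
  by_cases hTadj : T.Adj a b
  · have hH : (greedy ε w T l).Adj a b := (le_greedy T l) hTadj
    refine ⟨SimpleGraph.Walk.cons hH SimpleGraph.Walk.nil, ?_⟩
    rw [wlen_cons, wlen_nil]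
    nlinarith
  · have hmem := hl.2.2.2 a b hab hTadj
    obtain ⟨p, hp, hpe⟩ := List.mem_map.mp hmem
    obtain ⟨i, hi⟩ := List.mem_iff_get.mp hp
    have hne : (l.get i).1 ≠ (l.get i).2 := ((hl.2.2.1 _ (hi ▸ hp)).1).ne
    have hpe' : s((l.get i).1, (l.get i).2) = s(a, b) := by rw [hi]; exact hpe
    by_cases hacc : (1 + ε) * w s((l.get i).1, (l.get i).2) <
        wdist (greedy ε w T (l.take i)) w (l.get i).1 (l.get i).2
    · have hmem2 := greedy_accept_mem (T := T) l i hacc hne (j := l.length) i.isLt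
      rw [List.take_length] at hmem2
      rw [hpe'] at hmem2
      have hH : (greedy ε w T l).Adj a b := (SimpleGraph.mem_edgeSet _).mp hmem2
      refine ⟨SimpleGraph.Walk.cons hH SimpleGraph.Walk.nil, ?_⟩
      rw [wlen_cons, wlen_nil]
      nlinarith
    · push_neg at hacc
      have hne' : Nonempty ((greedy ε w T (l.take i)).Walk (l.get i).1 (l.get i).2) := by
        obtain ⟨q⟩ := hTc.preconnected (l.get i).1 (l.get i).2
        exact ⟨q.mapLe (le_greedy T (l.take i))⟩
      obtain ⟨q, hq⟩ := exists_walk_wlen_lt hw hne' hδ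
      have hq2 : wlen w q ≤ (1 + ε) * w s((l.get i).1, (l.get i).2) + δ := by linarith
      let q' := q.mapLe (greedy_mono_take T l i)
      have hq' : wlen w q' ≤ (1 + ε) * w s((l.get i).1, (l.get i).2) + δ := by
        rw [wlen_mapLe]; exact hq2
      rcases Sym2.eq_iff.mp hpe' with ⟨h1, h2⟩ | ⟨h1, h2⟩
      · subst h1; subst h2
        exact ⟨q', hq'⟩
      · subst h1; subst h2
        refine ⟨q'.reverse, ?_⟩
        rw [wlen_reverse]
        have hswap : s((l.get i).2, (l.get i).1) = s((l.get i).1, (l.get i).2) :=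
          Sym2.eq_swap
        rw [hswap]
        exact hq'

lemma greedy_factA (hε : 0 < ε) (hw : ∀ e, 0 ≤ w e) (l : List (V × V))
    (hl : IsGreedyInput G T w l) :
    ∀ a b : V, s(a, b) ∈ (greedy ε w T l).edgeSet → s(a, b) ∉ T.edgeSet →
      ∀ Q : (greedy ε w T l).Walk a b, Q.edges.Nodup → s(a, b) ∉ Q.edges →
        (1 + ε) * w s(a, b) < wlen w Q := by
  intro a b he heT Q hQnd heQ
  by_contra hcon0
  push_neg at hcon0
  rcases greedy_edge_mem l s(a, b) he with h | ⟨i, hie, hci⟩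
  · exact heT h
  set edgeAt : Fin l.length → Sym2 V := fun j => s((l.get j).1, (l.get j).2) with hEA
  have hinj : Function.Injective edgeAt := by
    intro j k hjk
    have hnd := hl.2.1
    rw [List.nodup_iff_injective_get] at hnd
    have hj : (j : ℕ) < (l.map fun p => s(p.1, p.2)).length := by simpa using j.isLt
    have hk : (k : ℕ) < (l.map fun p => s(p.1, p.2)).length := by simpa using k.isLt
    have e1 : (l.map fun p => s(p.1, p.2)).get ⟨(j : ℕ), hj⟩ = edgeAt j := by
      simp [hEA]
    have e2 : (l.map fun p => s(p.1, p.2)).get ⟨(k : ℕ), hk⟩ = edgeAt k := by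
      simp [hEA]
    have := hnd (a₁ := ⟨(j : ℕ), hj⟩) (a₂ := ⟨(k : ℕ), hk⟩) (by rw [e1, e2, hjk])
    exact Fin.ext (by simpa using congrArg Fin.val this)
  have hneAt : ∀ j : Fin l.length, (l.get j).1 ≠ (l.get j).2 :=
    fun j => ((hl.2.2.1 _ (l.get_mem _)).1).ne
  have hTAt : ∀ j : Fin l.length, edgeAt j ∉ T.edgeSet := by
    intro j hmem
    exact (hl.2.2.1 _ (l.get_mem _)).2 ((SimpleGraph.mem_edgeSet _).mp hmem)
  have hidx : ∀ g : Sym2 V, g ∈ (greedy ε w T l).edgeSet → g ∉ T.edgeSet →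
      ∃ j : Fin l.length, edgeAt j = g ∧
        (1 + ε) * w g < wdist (greedy ε w T (l.take j)) w (l.get j).1 (l.get j).2 := by
    intro g hg hgT
    rcases greedy_edge_mem l g hg with h | ⟨j, h1, h2⟩
    · exact absurd h hgT
    · exact ⟨j, h1, h2⟩
  set F : Finset (Fin l.length) :=
    Finset.univ.filter (fun j => edgeAt j ∈ Q.edges) with hFdef
  have hQsub : ∀ (k : ℕ), (∀ j ∈ F, (j : ℕ) < k) → ∀ g ∈ Q.edges,
      g ∈ (greedy ε w T (l.take k)).edgeSet := by
    intro k hk g hg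
    by_cases hgT : g ∈ T.edgeSet
    · exact SimpleGraph.edgeSet_mono (le_greedy T (l.take k)) hgT
    · have hgH : g ∈ (greedy ε w T l).edgeSet := Q.edges_subset_edgeSet hg
      obtain ⟨j, hje, hcj⟩ := hidx g hgH hgT
      have hjF : j ∈ F := by
        rw [hFdef, Finset.mem_filter]
        exact ⟨Finset.mem_univ _, by rw [hje]; exact hg⟩
      rw [← hje] at hcj
      have := greedy_accept_mem l j hcj (hneAt j) (hk j hjF)
      rw [← hje]
      exact this
  have hcontra1 : ∀ (k : ℕ), (∀ j ∈ F, (j : ℕ) < k) →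
      ¬ ((1 + ε) * w s(a, b) < wdist (greedy ε w T (l.take k)) w a b) := by
    intro k hk hlt
    have hsubs := hQsub k hk
    have h1 : wdist (greedy ε w T (l.take k)) w a b ≤ wlen w Q := by
      rw [← wlen_transfer Q hsubs]
      exact wdist_le_wlen hw _
    linarith
  have hci' : (1 + ε) * w s(a, b) < wdist (greedy ε w T (l.take i)) w a b := by
    rcases Sym2.eq_iff.mp hie with ⟨h1, h2⟩ | ⟨h1, h2⟩
    · rwa [h1, h2] at hci
    · rw [h1, h2] at hci
      rwa [wdist_comm hw] at hci
  by_cases hF : F.Nonempty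
  · set j' := F.max' hF with hj'def
    rcases lt_trichotomy (i : ℕ) (j' : ℕ) with hij' | hij' | hij'
    · -- main case: a later edge f on Q
      set f := edgeAt j' with hfdef
      have hfQ : f ∈ Q.edges := (Finset.mem_filter.mp (F.max'_mem hF)).2
      have hfH : f ∈ (greedy ε w T l).edgeSet := Q.edges_subset_edgeSet hfQ
      obtain ⟨j'', hj''e, hcj''⟩ := hidx f hfH (hTAt j')
      have hj''j' : j'' = j' := hinj hj''e
      subst hj''j'
      obtain ⟨x, y, A, B, hxyadj, hfeq, hedges⟩ := walk_split Q f hfQ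
      have hnd2 := hQnd
      rw [hedges] at hnd2
      rw [List.nodup_append] at hnd2
      have hfA : s(x, y) ∉ A.edges := by
        intro hmem
        exact (hnd2.2.2 _ hmem _ List.mem_cons_self) rfl
      have hfB : s(x, y) ∉ B.edges := (List.nodup_cons.mp hnd2.2.1).1
      have habH : (greedy ε w T l).Adj a b := (SimpleGraph.mem_edgeSet _).mp he
      set R := A.reverse.append (SimpleGraph.Walk.cons habH B.reverse) with hRdef
      have hmemQ : ∀ g, g ∈ A.edges ∨ g ∈ B.edges → g ∈ Q.edges ∧ g ≠ f := by
        intro g hg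
        constructor
        · rw [hedges, List.mem_append, List.mem_cons]
          rcases hg with hg | hg
          · exact Or.inl hg
          · exact Or.inr (Or.inr hg)
        · intro hgf
          rw [← hfeq] at hgf
          rcases hg with hg | hg
          · exact hfA (hgf ▸ hg)
          · exact hfB (hgf ▸ hg)
      have hRsub : ∀ g ∈ R.edges, g ∈ (greedy ε w T (l.take (j' : ℕ))).edgeSet := by
        intro g hg
        rw [hRdef, SimpleGraph.Walk.edges_append, SimpleGraph.Walk.edges_cons,
          SimpleGraph.Walk.edges_reverse, SimpleGraph.Walk.edges_reverse,
          List.mem_append, List.mem_cons] at hg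
        rcases hg with hg | hg | hg
        · -- g ∈ A.edges
          rw [List.mem_reverse] at hg
          obtain ⟨hgQ, hgf⟩ := hmemQ g (Or.inl hg)
          by_cases hgT : g ∈ T.edgeSet
          · exact SimpleGraph.edgeSet_mono (le_greedy T _) hgT
          · obtain ⟨jg, hjge, hcjg⟩ := hidx g (Q.edges_subset_edgeSet hgQ) hgT
            have hjgF : jg ∈ F := by
              rw [hFdef, Finset.mem_filter]
              exact ⟨Finset.mem_univ _, by rw [hjge]; exact hgQ⟩
            have hjgne : jg ≠ j' := fun hcc => hgf (by rw [← hjge, hcc])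
            have hjglt : (jg : ℕ) < (j' : ℕ) := by
              have := F.le_max' jg hjgF
              rw [← hj'def] at this
              omega
            rw [← hjge] at hcjg
            have := greedy_accept_mem l jg hcjg (hneAt jg) hjglt
            rw [← hjge]
            exact this
        · -- g = s(a,b)
          subst hg
          rw [← hie] at hci
          have := greedy_accept_mem l i hci (hneAt i) hij'
          rw [hie] at this
          exact this
        · rw [List.mem_reverse] at hg
          obtain ⟨hgQ, hgf⟩ := hmemQ g (Or.inr hg)
          by_cases hgT : g ∈ T.edgeSet
          · exact SimpleGraph.edgeSet_mono (le_greedy T _) hgT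
          · obtain ⟨jg, hjge, hcjg⟩ := hidx g (Q.edges_subset_edgeSet hgQ) hgT
            have hjgF : jg ∈ F := by
              rw [hFdef, Finset.mem_filter]
              exact ⟨Finset.mem_univ _, by rw [hjge]; exact hgQ⟩
            have hjgne : jg ≠ j' := fun hcc => hgf (by rw [← hjge, hcc])
            have hjglt : (jg : ℕ) < (j' : ℕ) := by
              have := F.le_max' jg hjgF
              rw [← hj'def] at this
              omega
            rw [← hjge] at hcjg
            have := greedy_accept_mem l jg hcjg (hneAt jg) hjglt
            rw [← hjge]
            exact this
      have hRw : wdist (greedy ε w T (l.take (j' : ℕ))) w x y ≤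
          wlen w A + w s(a, b) + wlen w B := by
        have h1 : wdist (greedy ε w T (l.take (j' : ℕ))) w x y ≤ wlen w R := by
          rw [← wlen_transfer R hRsub]
          exact wdist_le_wlen hw _
        have h2 : wlen w R = wlen w A + w s(a, b) + wlen w B := by
          rw [hRdef, wlen_append, wlen_cons, wlen_reverse, wlen_reverse]
          ring
        linarith
      have hQw : wlen w Q = wlen w A + w f + wlen w B := by
        have : wlen w Q = (Q.edges.map w).sum := rfl
        rw [this, hedges, List.map_append, List.sum_append, List.map_cons,
          List.sum_cons, hfeq]
        show _ = wlen w A + w f + wlen w B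
        unfold wlen
        ring
      have hwef : w s(a, b) ≤ w f := by
        have := sorted_weight (w := w) hl.1 (i := i) (j := j') (le_of_lt hij')
        rw [hie] at this
        exact this
      -- orient the endpoints of f
      have hpair : s((l.get j').1, (l.get j').2) = s(x, y) := hfeq.symm
      have hKey : (1 + ε) * w f < wlen w A + w s(a, b) + wlen w B := by
        rcases Sym2.eq_iff.mp hpair with ⟨h1, h2⟩ | ⟨h1, h2⟩
        · rw [h1, h2] at hcj''
          linarith
        · rw [h1, h2] at hcj''
          rw [wdist_comm hw] at hcj''
          linarith
      rw [hQw] at hcon0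
      have hmul : ε * w s(a, b) ≤ ε * w f := mul_le_mul_of_nonneg_left hwef hε.le
      nlinarith
    · -- i = j' impossible
      have : i = j' := Fin.ext hij'
      subst this
      exact heQ (by rw [← hie]; exact (Finset.mem_filter.mp (F.max'_mem hF)).2)
    · -- all of Q is earlier than i
      refine hcontra1 (i : ℕ) ?_ hci'
      intro j hj
      have h1 := F.le_max' j hj
      rw [← hj'def] at h1
      omega
  · refine hcontra1 (i : ℕ) ?_ hci'
    intro j hj
    exact absurd ⟨j, hj⟩ hF

end GreedyFacts


section MoreWalk
variable {V : Type*} {Δ : SimpleGraph V} {w : Sym2 V → ℝ}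

lemma sum_map_le_of_nodup_subset {l₁ l₂ : List (Sym2 V)} (h₁ : l₁.Nodup)
    (hsub : l₁ ⊆ l₂) (hw : ∀ e, 0 ≤ w e) :
    (l₁.map w).sum ≤ (l₂.map w).sum := by
  obtain ⟨l', hperm, hsubl⟩ := h₁.subperm hsub
  calc (l₁.map w).sum = (l'.map w).sum := ((hperm.map w).sum_eq).symm
    _ ≤ (l₂.map w).sum := by
        refine sublist_sum_le (hsubl.map w) ?_
        intro r hr
        obtain ⟨e, _, rfl⟩ := List.mem_map.mp hr
        exact hw e

lemma orient (w : Sym2 V → ℝ) {a b xx yy : V} (hse : s(a, b) = s(xx, yy))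
    (W : Δ.Walk a b) :
    ∃ W' : Δ.Walk xx yy, wlen w W' = wlen w W ∧ ∀ g, g ∈ W'.edges ↔ g ∈ W.edges := by
  rcases Sym2.eq_iff.mp hse with ⟨h1, h2⟩ | ⟨h1, h2⟩
  · subst h1; subst h2; exact ⟨W, rfl, fun g => Iff.rfl⟩
  · subst h1; subst h2
    exact ⟨W.reverse, wlen_reverse W, fun g => by
      rw [SimpleGraph.Walk.edges_reverse, List.mem_reverse]⟩

end MoreWalk

section Charge
variable {V : Type*} {G : SimpleGraph V} {x : Detour G → ℝ}

lemma chargeOut_eq_sum (hfin : x.support.Finite) (e : Sym2 V) :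
    chargeOut x e = ∑ d ∈ hfin.toFinset.filter (fun d => d.edge = e), x d := by
  apply finsum_mem_eq_sum_of_inter_support_eq
  ext d
  simp only [Set.mem_inter_iff, Set.mem_setOf_eq, Finset.coe_filter,
    Set.Finite.mem_toFinset, Function.mem_support]
  tauto

lemma chargeIn_eq_sum (hfin : x.support.Finite) (e : Sym2 V) :
    chargeIn x e = ∑ d ∈ hfin.toFinset.filter (fun d => e ∈ d.path.edges), x d := by
  apply finsum_mem_eq_sum_of_inter_support_eq
  ext d
  simp only [Set.mem_inter_iff, Set.mem_setOf_eq, Finset.coe_filter,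
    Set.Finite.mem_toFinset, Function.mem_support]
  tauto

lemma chargeOut_nonneg (hfin : x.support.Finite) (hpos : ∀ d, 0 ≤ x d) (e : Sym2 V) :
    0 ≤ chargeOut x e := by
  rw [chargeOut_eq_sum hfin]
  exact Finset.sum_nonneg fun d _ => hpos d

lemma chargeIn_nonneg (hfin : x.support.Finite) (hpos : ∀ d, 0 ≤ x d) (e : Sym2 V) :
    0 ≤ chargeIn x e := by
  rw [chargeIn_eq_sum hfin]
  exact Finset.sum_nonneg fun d _ => hpos d

end Charge

/-- if `G` has a spanning tree `T` admitting an acyclic charging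
scheme of value `v`, then for any `ε > 0` and nonnegative weights the greedy
algorithm (forcing the edges of `T`) outputs a `(1+ε)`-spanner `G'` containing `T`
with `w(G') ≤ (1 + v/ε)·w(T)`. -/
theorem stmt17 {V : Type*} [Fintype V]
    (G T : SimpleGraph V) (v : ℝ) (x : Detour G → ℝ)
    (hconn : G.Connected) (hT : IsSpanningTree G T) (hv : 0 ≤ v)
    (hx : IsAcyclicScheme G T v x)
    (ε : ℝ) (hε : 0 < ε) (w : Sym2 V → ℝ) (hw : ∀ e, 0 ≤ w e)
    (l : List (V × V)) (hl : IsGreedyInput G T w l) :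
    T ≤ greedy ε w T l ∧ greedy ε w T l ≤ G ∧
      (∀ u v' : V,
        wdist (greedy ε w T l) w u v' ≤ (1 + ε) * wdist G w u v') ∧
      totalWeight (greedy ε w T l) w ≤ (1 + v / ε) * totalWeight T w := by
  obtain ⟨hscheme, hnontree, ord, hord⟩ := hx
  obtain ⟨hxpos, hxfin, hout1, houtin, hinv⟩ := hscheme
  obtain ⟨hTG, hTtree⟩ := hT
  have hTc : T.Connected := hTtree.isConnected
  have hTH : T ≤ greedy ε w T l := le_greedy T l
  have hHG : greedy ε w T l ≤ G := greedy_le hTG l (fun p hp => (hl.2.2.1 p hp).1)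
  have factB := greedy_factB (G := G) (T := T) hε hw l hl hTc
  have factA := greedy_factA (G := G) (T := T) hε hw l hl
  refine ⟨hTH, hHG, ?_, ?_⟩
  · -- the (1+ε)-spanner property
    intro u v'
    have hSne : {r : ℝ | ∃ p : G.Walk u v', wlen w p = r}.Nonempty := by
      obtain ⟨p⟩ := hconn.preconnected u v'
      exact ⟨wlen w p, p, rfl⟩
    have hkey : ∀ r ∈ {r : ℝ | ∃ p : G.Walk u v', wlen w p = r},
        wdist (greedy ε w T l) w u v' ≤ (1 + ε) * r := by
      rintro r ⟨p, rfl⟩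
      apply le_of_forall_pos_le_add
      intro δ hδ
      have hside : ∀ xx yy : V, s(xx, yy) ∈ p.edges → ∀ δ' : ℝ, 0 < δ' →
          ∃ W : (greedy ε w T l).Walk xx yy,
            wlen w W ≤ (1 + ε) * w s(xx, yy) + δ' ∧ ∀ g ∈ W.edges, True := by
        intro xx yy hxy δ' hδ'
        have hadj : G.Adj xx yy := p.adj_of_mem_edges hxy
        obtain ⟨W, hW⟩ := factB xx yy hadj δ' hδ'
        exact ⟨W, hW, fun _ _ => trivial⟩
      obtain ⟨W, hWlen, -⟩ := shadow (Δ := greedy ε w T l) (w := w) (fun _ => True)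
        (fun f => (1 + ε) * w f) p hside δ hδ
      calc wdist (greedy ε w T l) w u v' ≤ wlen w W := wdist_le_wlen hw W
        _ ≤ (p.edges.map fun f => (1 + ε) * w f).sum + δ := hWlen
        _ = (1 + ε) * wlen w p + δ := by
            unfold wlen
            rw [List.sum_map_mul_left]
    have h1 : wdist (greedy ε w T l) w u v' / (1 + ε) ≤ wdist G w u v' := by
      rw [show wdist G w u v' = sInf {r : ℝ | ∃ p : G.Walk u v', wlen w p = r} from rfl]
      apply le_csInf hSne
      intro r hr
      rw [div_le_iff₀ (by linarith : (0:ℝ) < 1 + ε)]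
      calc wdist (greedy ε w T l) w u v' ≤ (1 + ε) * r := hkey r hr
        _ = r * (1 + ε) := mul_comm _ _
    calc wdist (greedy ε w T l) w u v'
        = (wdist (greedy ε w T l) w u v' / (1 + ε)) * (1 + ε) := by
          field_simp
      _ ≤ wdist G w u v' * (1 + ε) :=
          mul_le_mul_of_nonneg_right h1 (by linarith)
      _ = (1 + ε) * wdist G w u v' := mul_comm _ _
  · -- the weight bound
    set H := greedy ε w T l with hHdef
    set Dfin := hxfin.toFinset with hDdef
    have hmemD : ∀ d : Detour G, d ∈ Dfin ↔ x d ≠ 0 := fun d => Set.Finite.mem_toFinset _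
    set Aset : Sym2 V → Set ℝ := fun e => {r | ∃ (a b : V) (W : H.Walk a b),
      s(a, b) = e ∧ (∀ g ∈ W.edges, g ∉ T.edgeSet → ord e ≤ ord g) ∧ wlen w W = r}
      with hAdef
    set μ : Sym2 V → ℝ := fun e => if e ∈ T.edgeSet then w e else sInf (Aset e)
      with hμdef
    have hAnonneg : ∀ e, ∀ r ∈ Aset e, (0:ℝ) ≤ r := by
      rintro e r ⟨a, b, W, -, -, rfl⟩
      exact wlen_nonneg hw W
    have hAbdd : ∀ e, BddBelow (Aset e) := fun e => ⟨0, fun r hr => hAnonneg e r hr⟩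
    have hμ0 : ∀ e, 0 ≤ μ e := by
      intro e
      rw [hμdef]
      dsimp only
      split
      · exact hw e
      · exact Real.sInf_nonneg (hAnonneg e)
    have hμT : ∀ e ∈ T.edgeSet, μ e = w e := by
      intro e he
      rw [hμdef]
      simp [he]
    have hμle : ∀ e, e ∉ T.edgeSet → ∀ r ∈ Aset e, μ e ≤ r := by
      intro e he r hr
      rw [hμdef]
      dsimp only
      rw [if_neg he]
      exact csInf_le (hAbdd e) hr
    have hμeq : ∀ e, e ∉ T.edgeSet → μ e = sInf (Aset e) := by
      intro e he
      rw [hμdef]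
      dsimp only
      rw [if_neg he]
    set M := (Finset.univ : Finset (Sym2 V)).sup ord with hM
    have hordle : ∀ e : Sym2 V, ord e ≤ M := fun e => Finset.le_sup (Finset.mem_univ e)
    have hDne : ∀ e ∈ G.edgeSet, e ∉ T.edgeSet → ∃ d : Detour G, x d ≠ 0 ∧ d.edge = e := by
      intro e heG heT
      by_contra hno
      push_neg at hno
      have hzero : chargeOut x e = 0 := by
        rw [chargeOut_eq_sum hxfin]
        apply Finset.sum_eq_zero
        intro d hd
        rw [Finset.mem_filter] at hd
        exact absurd hd.2 (hno d ((hmemD d).mp hd.1))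
      have := hout1 e heG heT
      rw [hzero] at this
      linarith
    -- existence of ord-respecting walks
    have hE : ∀ k : ℕ, ∀ e ∈ G.edgeSet, e ∉ T.edgeSet → M + 1 - ord e ≤ k →
        (Aset e).Nonempty := by
      intro k
      induction k with
      | zero =>
          intro e heG heT hk
          exact absurd hk (by have := hordle e; omega)
      | succ k ih =>
          intro e heG heT hk
          obtain ⟨d, hxd, hde⟩ := hDne e heG heT
          have hstep : ∀ xx yy : V, s(xx, yy) ∈ d.path.edges →
              ∃ W : H.Walk xx yy, ∀ g ∈ W.edges, g ∉ T.edgeSet → ord e ≤ ord g := by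
            intro xx yy hxyP
            have hfG : s(xx, yy) ∈ G.edgeSet := d.path.edges_subset_edgeSet hxyP
            by_cases hfT : s(xx, yy) ∈ T.edgeSet
            · have hadj : H.Adj xx yy := hTH ((SimpleGraph.mem_edgeSet _).mp hfT)
              refine ⟨SimpleGraph.Walk.cons hadj SimpleGraph.Walk.nil, ?_⟩
              intro g hg hgT
              simp only [SimpleGraph.Walk.edges_cons, SimpleGraph.Walk.edges_nil,
                List.mem_singleton] at hg
              exact absurd (hg ▸ hfT) hgT
            · have hordlt : ord e < ord s(xx, yy) := by
                have := hord d hxd _ hxyP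
                rwa [hde] at this
              have hrec : M + 1 - ord s(xx, yy) ≤ k := by
                have h1 := hordle s(xx, yy)
                omega
              obtain ⟨r, a', b', W', hse, hge, -⟩ := ih s(xx, yy) hfG hfT hrec
              obtain ⟨W1, -, hWe⟩ := orient w hse W'
              refine ⟨W1, ?_⟩
              intro g hg hgT
              exact le_trans (le_of_lt hordlt) (hge g ((hWe g).mp hg) hgT)
          obtain ⟨W, hW⟩ := concat_exists (Δ := H)
            (fun g => g ∉ T.edgeSet → ord e ≤ ord g) d.path hstep
          refine ⟨wlen w W, d.v, d.u, W, ?_, hW, rfl⟩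
          rw [← hde]
          exact Sym2.eq_swap
    -- the per-detour inequality
    have hC : ∀ d ∈ Dfin, μ d.edge +
        (if d.edge ∈ H.edgeSet then ε * w d.edge else 0) ≤
        (d.path.edges.map μ).sum := by
      intro d hd
      have hxd : x d ≠ 0 := (hmemD d).mp hd
      have heT : d.edge ∉ T.edgeSet := hnontree d hxd
      have heG : d.edge ∈ G.edgeSet := (SimpleGraph.mem_edgeSet _).mpr d.adj
      have hsw : s(d.v, d.u) = d.edge := Sym2.eq_swap
      apply le_of_forall_pos_le_add
      intro δ hδ
      have hstep : ∀ xx yy : V, s(xx, yy) ∈ d.path.edges → ∀ δ' : ℝ, 0 < δ' →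
          ∃ W : H.Walk xx yy, wlen w W ≤ μ s(xx, yy) + δ' ∧
            ∀ g ∈ W.edges, g ∉ T.edgeSet → ord d.edge < ord g := by
        intro xx yy hxyP δ' hδ'
        have hfG : s(xx, yy) ∈ G.edgeSet := d.path.edges_subset_edgeSet hxyP
        have hordlt : ord d.edge < ord s(xx, yy) := hord d hxd _ hxyP
        by_cases hfT : s(xx, yy) ∈ T.edgeSet
        · have hadj : H.Adj xx yy := hTH ((SimpleGraph.mem_edgeSet _).mp hfT)
          refine ⟨SimpleGraph.Walk.cons hadj SimpleGraph.Walk.nil, ?_, ?_⟩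
          · rw [wlen_cons, wlen_nil, hμT _ hfT]
            linarith
          · intro g hg hgT
            simp only [SimpleGraph.Walk.edges_cons, SimpleGraph.Walk.edges_nil,
              List.mem_singleton] at hg
            exact absurd (hg ▸ hfT) hgT
        · have hne := hE (M + 1 - ord s(xx, yy)) s(xx, yy) hfG hfT le_rfl
          obtain ⟨r, hr, hrlt⟩ := Real.lt_sInf_add_pos hne hδ'
          obtain ⟨a', b', W', hse, hge, hwr⟩ := hr
          obtain ⟨W1, hW1len, hWe⟩ := orient w hse W'
          refine ⟨W1, ?_, ?_⟩
          · rw [hW1len, hwr, hμeq _ hfT]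
            exact le_of_lt hrlt
          · intro g hg hgT
            exact lt_of_lt_of_le hordlt (hge g ((hWe g).mp hg) hgT)
      obtain ⟨W, hWlen, hWP⟩ := shadow (Δ := H) (w := w)
        (fun g => g ∉ T.edgeSet → ord d.edge < ord g) μ d.path hstep δ hδ
      by_cases heH : d.edge ∈ H.edgeSet
      · rw [if_pos heH]
        have heW : s(d.v, d.u) ∉ W.bypass.edges := by
          intro hmem
          have h2 := hWP _ (W.edges_bypass_subset hmem)
          rw [hsw] at h2
          exact absurd (h2 heT) (lt_irrefl _)
        have hfA := factA d.v d.u (by rw [hsw]; exact heH) (by rw [hsw]; exact heT)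
          W.bypass W.bypass_isPath.isTrail.edges_nodup heW
        have hb : wlen w W.bypass ≤ wlen w W :=
          sum_map_le_of_nodup_subset W.bypass_isPath.isTrail.edges_nodup
            W.edges_bypass_subset hw
        have hμw : μ d.edge ≤ w d.edge := by
          have hadj : H.Adj d.u d.v := (SimpleGraph.mem_edgeSet _).mp heH
          have hmem : w d.edge ∈ Aset d.edge := by
            refine ⟨d.u, d.v, SimpleGraph.Walk.cons hadj SimpleGraph.Walk.nil,
              rfl, ?_, ?_⟩
            · intro g hg hgT
              simp only [SimpleGraph.Walk.edges_cons, SimpleGraph.Walk.edges_nil,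
                List.mem_singleton] at hg
              rw [hg]
              exact le_refl (ord d.edge)
            · rw [wlen_cons, wlen_nil]
              show w s(d.u, d.v) + 0 = w d.edge
              rw [add_zero]
              rfl
          exact hμle _ heT _ hmem
        rw [hsw] at hfA
        linarith
      · rw [if_neg heH, add_zero]
        refine le_trans (hμle d.edge heT (wlen w W) ?_) hWlen
        exact ⟨d.v, d.u, W, hsw, fun g hg hgT => le_of_lt (hWP g hg hgT), rfl⟩
    -- summation bookkeeping
    have hPnodup : ∀ d : Detour G, d.path.edges.Nodup := by
      intro d
      have h2 := d.cyc.edges_nodup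
      rw [SimpleGraph.Walk.edges_cons] at h2
      exact (List.nodup_cons.mp h2).2
    have hlhs : ∀ ν : Sym2 V → ℝ,
        ∑ d ∈ Dfin, x d * ν d.edge = ∑ e : Sym2 V, chargeOut x e * ν e := by
      intro ν
      have step1 : ∀ d ∈ Dfin, x d * ν d.edge
          = ∑ e : Sym2 V, (if d.edge = e then x d * ν e else 0) := by
        intro d _
        rw [Finset.sum_ite_eq Finset.univ d.edge (fun e => x d * ν e)]
        simp
      calc ∑ d ∈ Dfin, x d * ν d.edge
          = ∑ d ∈ Dfin, ∑ e : Sym2 V, (if d.edge = e then x d * ν e else 0) :=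
            Finset.sum_congr rfl step1
        _ = ∑ e : Sym2 V, ∑ d ∈ Dfin, (if d.edge = e then x d * ν e else 0) :=
            Finset.sum_comm
        _ = ∑ e : Sym2 V, chargeOut x e * ν e := by
            apply Finset.sum_congr rfl
            intro e _
            rw [chargeOut_eq_sum hxfin, Finset.sum_mul, Finset.sum_filter]
    have hrhs : ∑ d ∈ Dfin, x d * (d.path.edges.map μ).sum
        = ∑ f : Sym2 V, chargeIn x f * μ f := by
      have step1 : ∀ d ∈ Dfin, x d * (d.path.edges.map μ).sum
          = ∑ f : Sym2 V, (if f ∈ d.path.edges then x d * μ f else 0) := by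
        intro d _
        have hfin : Finset.univ.filter (fun f : Sym2 V => f ∈ d.path.edges)
            = d.path.edges.toFinset := by
          ext f
          simp
        calc x d * (d.path.edges.map μ).sum
            = x d * ∑ f ∈ d.path.edges.toFinset, μ f := by
              rw [List.sum_toFinset μ (hPnodup d)]
          _ = ∑ f ∈ d.path.edges.toFinset, x d * μ f := by
              rw [Finset.mul_sum]
          _ = ∑ f ∈ Finset.univ.filter (fun f : Sym2 V => f ∈ d.path.edges),
                x d * μ f := by rw [hfin]
          _ = ∑ f : Sym2 V, (if f ∈ d.path.edges then x d * μ f else 0) :=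
              Finset.sum_filter _ _
      calc ∑ d ∈ Dfin, x d * (d.path.edges.map μ).sum
          = ∑ d ∈ Dfin, ∑ f : Sym2 V, (if f ∈ d.path.edges then x d * μ f else 0) :=
            Finset.sum_congr rfl step1
        _ = ∑ f : Sym2 V, ∑ d ∈ Dfin, (if f ∈ d.path.edges then x d * μ f else 0) :=
            Finset.sum_comm
        _ = ∑ f : Sym2 V, chargeIn x f * μ f := by
            apply Finset.sum_congr rfl
            intro f _
            rw [chargeIn_eq_sum hxfin, Finset.sum_mul, Finset.sum_filter]
    have hsum1 : ∑ d ∈ Dfin, x d * μ d.edge +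
        ∑ d ∈ Dfin, x d * (if d.edge ∈ H.edgeSet then ε * w d.edge else 0) ≤
        ∑ d ∈ Dfin, x d * (d.path.edges.map μ).sum := by
      rw [← Finset.sum_add_distrib]
      apply Finset.sum_le_sum
      intro d hd
      have h1 := hC d hd
      have h2 := hxpos d
      calc x d * μ d.edge + x d * (if d.edge ∈ H.edgeSet then ε * w d.edge else 0)
          = x d * (μ d.edge + (if d.edge ∈ H.edgeSet then ε * w d.edge else 0)) := by
            ring
        _ ≤ x d * (d.path.edges.map μ).sum := mul_le_mul_of_nonneg_left h1 h2
    have hchargeOutT : ∀ f ∈ T.edgeSet, chargeOut x f = 0 := by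
      intro f hf
      rw [chargeOut_eq_sum hxfin]
      apply Finset.sum_eq_zero
      intro d hd
      rw [Finset.mem_filter] at hd
      exact absurd hf (hd.2 ▸ hnontree d ((hmemD d).mp hd.1))
    have hchargeOutG : ∀ f, f ∉ G.edgeSet → chargeOut x f = 0 := by
      intro f hf
      rw [chargeOut_eq_sum hxfin]
      apply Finset.sum_eq_zero
      intro d hd
      rw [Finset.mem_filter] at hd
      exact absurd (hd.2 ▸ ((SimpleGraph.mem_edgeSet _).mpr d.adj)) hf
    have hchargeInG : ∀ f, f ∉ G.edgeSet → chargeIn x f = 0 := by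
      intro f hf
      rw [chargeIn_eq_sum hxfin]
      apply Finset.sum_eq_zero
      intro d hd
      rw [Finset.mem_filter] at hd
      exact absurd (d.path.edges_subset_edgeSet hd.2) hf
    set TF := (Finset.univ : Finset (Sym2 V)).filter (· ∈ T.edgeSet) with hTF
    have htreebound : ∑ f ∈ TF, chargeIn x f * μ f ≤ v * ∑ f ∈ TF, w f := by
      rw [Finset.mul_sum]
      apply Finset.sum_le_sum
      intro f hf
      have hfT : f ∈ T.edgeSet := (Finset.mem_filter.mp hf).2
      have h1 : chargeIn x f ≤ v := by
        have h2 := hinv f hfT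
        have h3 := hchargeOutT f hfT
        linarith
      rw [hμT f hfT]
      exact mul_le_mul_of_nonneg_right h1 (hw f)
    have hnontreebound : ∀ f, f ∉ T.edgeSet →
        chargeIn x f * μ f ≤ chargeOut x f * μ f := by
      intro f hfT
      apply mul_le_mul_of_nonneg_right _ (hμ0 f)
      by_cases hfG : f ∈ G.edgeSet
      · have := houtin f hfG hfT
        linarith
      · rw [hchargeInG f hfG, hchargeOutG f hfG]
    have hsplitIn : ∑ f : Sym2 V, chargeIn x f * μ f ≤
        v * ∑ f ∈ TF, w f +
        ∑ f ∈ Finset.univ.filter (fun f => f ∉ T.edgeSet), chargeOut x f * μ f := by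
      rw [← Finset.sum_filter_add_sum_filter_not Finset.univ (fun f => f ∈ T.edgeSet)
        (fun f => chargeIn x f * μ f)]
      apply add_le_add
      · exact htreebound
      · apply Finset.sum_le_sum
        intro f hf
        exact hnontreebound f (Finset.mem_filter.mp hf).2
    have hsplitOut : ∑ e : Sym2 V, chargeOut x e * μ e =
        ∑ f ∈ Finset.univ.filter (fun f => f ∉ T.edgeSet), chargeOut x f * μ f := by
      rw [← Finset.sum_filter_add_sum_filter_not Finset.univ (fun f => f ∈ T.edgeSet)
        (fun f => chargeOut x f * μ f)]
      have hz : ∑ f ∈ Finset.univ.filter (fun f => f ∈ T.edgeSet),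
          chargeOut x f * μ f = 0 := by
        apply Finset.sum_eq_zero
        intro f hf
        rw [hchargeOutT f (Finset.mem_filter.mp hf).2, zero_mul]
      rw [hz, zero_add]
    have hmain : ∑ e : Sym2 V, chargeOut x e * (if e ∈ H.edgeSet then ε * w e else 0)
        ≤ v * ∑ f ∈ TF, w f := by
      have h1 := hsum1
      rw [hlhs μ, hlhs (fun e => if e ∈ H.edgeSet then ε * w e else 0), hrhs,
        hsplitOut] at h1
      linarith [hsplitIn]
    set SEF := (Finset.univ.filter (· ∈ H.edgeSet)).filter (fun f => f ∉ T.edgeSet)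
      with hSEF
    have hSE : ε * ∑ f ∈ SEF, w f ≤
        ∑ e : Sym2 V, chargeOut x e * (if e ∈ H.edgeSet then ε * w e else 0) := by
      rw [Finset.mul_sum]
      have hterm : ∀ f ∈ SEF, ε * w f ≤
          chargeOut x f * (if f ∈ H.edgeSet then ε * w f else 0) := by
        intro f hf
        rw [hSEF, Finset.mem_filter, Finset.mem_filter] at hf
        obtain ⟨⟨-, hfH⟩, hfT⟩ := hf
        rw [if_pos hfH]
        have hfG : f ∈ G.edgeSet := SimpleGraph.edgeSet_mono hHG hfH
        have h1 := hout1 f hfG hfT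
        have h2 : 0 ≤ ε * w f := mul_nonneg hε.le (hw f)
        exact le_mul_of_one_le_left h2 h1
      calc ∑ f ∈ SEF, ε * w f
          ≤ ∑ f ∈ SEF, chargeOut x f * (if f ∈ H.edgeSet then ε * w f else 0) :=
            Finset.sum_le_sum hterm
        _ ≤ ∑ e : Sym2 V, chargeOut x e * (if e ∈ H.edgeSet then ε * w e else 0) := by
            apply Finset.sum_le_sum_of_subset_of_nonneg (Finset.subset_univ _)
            intro f _ _
            apply mul_nonneg (chargeOut_nonneg hxfin hxpos f)
            split_ifs
            · exact mul_nonneg hε.le (hw f)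
            · exact le_rfl
    have hSEW : ∑ f ∈ SEF, w f ≤ (v / ε) * ∑ f ∈ TF, w f := by
      have h := le_trans hSE hmain
      rw [div_mul_eq_mul_div, le_div_iff₀ hε]
      calc (∑ f ∈ SEF, w f) * ε = ε * ∑ f ∈ SEF, w f := mul_comm _ _
        _ ≤ v * ∑ f ∈ TF, w f := h
    have htw : ∀ K : SimpleGraph V, totalWeight K w =
        ∑ f ∈ Finset.univ.filter (· ∈ K.edgeSet), w f := by
      intro K
      rw [totalWeight, ← finsum_mem_coe_finset]
      congr 1
      ext f
      simp
    have hTFsum : totalWeight T w = ∑ f ∈ TF, w f := by rw [htw T, hTF]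
    have hsplitH : totalWeight H w = ∑ f ∈ TF, w f + ∑ f ∈ SEF, w f := by
      rw [htw H]
      rw [← Finset.sum_filter_add_sum_filter_not (Finset.univ.filter (· ∈ H.edgeSet))
        (fun f => f ∈ T.edgeSet) w]
      have hsets : (Finset.univ.filter (· ∈ H.edgeSet)).filter
          (fun f => f ∈ T.edgeSet) = TF := by
        rw [hTF]
        ext f
        simp only [Finset.mem_filter, Finset.mem_univ, true_and]
        constructor
        · rintro ⟨-, h2⟩; exact h2
        · intro h2; exact ⟨SimpleGraph.edgeSet_mono hTH h2, h2⟩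
      have hsets2 : (Finset.univ.filter (· ∈ H.edgeSet)).filter
          (fun f => ¬ f ∈ T.edgeSet) = SEF := by
        rw [hSEF]
      rw [hsets, hsets2]
    rw [hsplitH, hTFsum]
    have hfinal : (1 + v / ε) * ∑ f ∈ TF, w f
        = ∑ f ∈ TF, w f + (v / ε) * ∑ f ∈ TF, w f := by ring
    rw [hfinal]
    linarith [hSEW]
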